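/- For the folded Gaussian kernel: if V : [0,∞) → [0,∞) is measurable, non-decreasing, and integrable against Gaussian tails, then the map s ↦ e^{γ s²} ∫_{[0,∞)} φ(v, a s) V(v) dv is non-decreasing in s ≥ 0 (where a ≥ 0, γ > 0). -/

import Mathlib

open MeasureTheory Real Set

/-- `cosh` product-to-sum comparison: the ratio `cosh (c₂ v) / cosh (c₁ v)`
is non-decreasing in `v ≥ 0` when `0 ≤ c₁ ≤ c₂`. -/
lemma aux_cosh_ratio {c₁ c₂ v w : ℝ} (hc₁ : 0 ≤ c₁) (hc : c₁ ≤ c₂)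
    (hv : 0 ≤ v) (hvw : v ≤ w) :
    Real.cosh (c₂ * v) * Real.cosh (c₁ * w) ≤ Real.cosh (c₂ * w) * Real.cosh (c₁ * v) := by
  have key : ∀ x y : ℝ, Real.cosh x * Real.cosh y
      = (Real.cosh (x + y) + Real.cosh (x - y)) / 2 := by
    intro x y
    rw [Real.cosh_add, Real.cosh_sub]
    ring
  rw [key, key]
  have h1 : Real.cosh (c₂ * v + c₁ * w) ≤ Real.cosh (c₂ * w + c₁ * v) := by
    rw [Real.cosh_le_cosh]
    have hA : (0:ℝ) ≤ c₂ * v + c₁ * w := by nlinarith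
    have hB : (0:ℝ) ≤ c₂ * w + c₁ * v := by nlinarith
    rw [abs_of_nonneg hA, abs_of_nonneg hB]
    nlinarith
  have h2 : Real.cosh (c₂ * v - c₁ * w) ≤ Real.cosh (c₂ * w - c₁ * v) := by
    rw [Real.cosh_le_cosh]
    have hB : (0:ℝ) ≤ c₂ * w - c₁ * v := by nlinarith
    rw [abs_of_nonneg hB]
    have := abs_le.mpr (And.intro (by nlinarith : -(c₂ * w - c₁ * v) ≤ c₂ * v - c₁ * w)
      (by nlinarith : c₂ * v - c₁ * w ≤ c₂ * w - c₁ * v))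
    linarith [this]
  linarith

/-- The folded Gaussian kernel written via `cosh`. -/
lemma aux_phi_eq {σ : ℝ} (hσ : 0 < σ) (v t : ℝ) :
    Real.exp (-(v - t)^2 / (2 * σ^2)) + Real.exp (-(v + t)^2 / (2 * σ^2))
      = 2 * Real.exp (-v^2 / (2 * σ^2)) * Real.exp (-t^2 / (2 * σ^2))
          * Real.cosh (v * t / σ^2) := by
  have hσ2 : σ^2 ≠ 0 := by positivity
  have e1 : -(v - t)^2 / (2 * σ^2)
      = (-v^2 / (2 * σ^2)) + (-t^2 / (2 * σ^2)) + v * t / σ^2 := by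
    field_simp; ring
  have e2 : -(v + t)^2 / (2 * σ^2)
      = (-v^2 / (2 * σ^2)) + (-t^2 / (2 * σ^2)) + (-(v * t / σ^2)) := by
    field_simp; ring
  rw [e1, e2, Real.exp_add, Real.exp_add, Real.exp_add, Real.exp_add, Real.cosh_eq]
  ring

/-- Single-crossing property of the folded Gaussian kernel difference. -/
lemma aux_crossing {σ t₁ t₂ : ℝ} (hσ : 0 < σ) (ht₁ : 0 ≤ t₁) (ht : t₁ ≤ t₂)
    {v w : ℝ} (hv : 0 ≤ v) (hvw : v ≤ w)
    (h : Real.exp (-(v - t₁)^2 / (2 * σ^2)) + Real.exp (-(v + t₁)^2 / (2 * σ^2))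
        ≤ Real.exp (-(v - t₂)^2 / (2 * σ^2)) + Real.exp (-(v + t₂)^2 / (2 * σ^2))) :
    Real.exp (-(w - t₁)^2 / (2 * σ^2)) + Real.exp (-(w + t₁)^2 / (2 * σ^2))
        ≤ Real.exp (-(w - t₂)^2 / (2 * σ^2)) + Real.exp (-(w + t₂)^2 / (2 * σ^2)) := by
  rw [aux_phi_eq hσ, aux_phi_eq hσ] at h ⊢
  set B₁ := Real.exp (-t₁^2 / (2 * σ^2)) with hB₁
  set B₂ := Real.exp (-t₂^2 / (2 * σ^2)) with hB₂
  have hB₁pos : 0 < B₁ := Real.exp_pos _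
  have hB₂pos : 0 < B₂ := Real.exp_pos _
  have hEv : 0 < Real.exp (-v^2 / (2 * σ^2)) := Real.exp_pos _
  have hEw : 0 < Real.exp (-w^2 / (2 * σ^2)) := Real.exp_pos _
  -- reduce hypothesis to B₁ cosh(c₁ v) ≤ B₂ cosh(c₂ v)
  have hv' : B₁ * Real.cosh (v * t₁ / σ^2) ≤ B₂ * Real.cosh (v * t₂ / σ^2) := by
    have := h
    nlinarith [this]
  -- goal reduces similarly
  have hgoal : B₁ * Real.cosh (w * t₁ / σ^2) ≤ B₂ * Real.cosh (w * t₂ / σ^2) := by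
    set c₁ := t₁ / σ^2 with hc₁def
    set c₂ := t₂ / σ^2 with hc₂def
    have hc₁ : 0 ≤ c₁ := by positivity
    have hcc : c₁ ≤ c₂ := by
      rw [hc₁def, hc₂def]; gcongr
    have hratio := aux_cosh_ratio hc₁ hcc hv hvw
    have hcosh1v : 0 < Real.cosh (c₁ * v) := Real.cosh_pos _
    have hcosh1w : 0 < Real.cosh (c₁ * w) := Real.cosh_pos _
    have e1v : v * t₁ / σ^2 = c₁ * v := by rw [hc₁def]; field_simp
    have e2v : v * t₂ / σ^2 = c₂ * v := by rw [hc₂def]; field_simp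
    have e1w : w * t₁ / σ^2 = c₁ * w := by rw [hc₁def]; field_simp
    have e2w : w * t₂ / σ^2 = c₂ * w := by rw [hc₂def]; field_simp
    rw [e1v, e2v] at hv'
    rw [e1w, e2w]
    -- B₁ cosh(c₁ w) cosh(c₁ v) ≤ B₂ cosh(c₂ v) cosh(c₁ w) ≤ B₂ cosh(c₂ w) cosh(c₁ v)
    have step1 : B₁ * Real.cosh (c₁ * w) * Real.cosh (c₁ * v)
        ≤ B₂ * Real.cosh (c₂ * v) * Real.cosh (c₁ * w) := by nlinarith
    have step2 : B₂ * Real.cosh (c₂ * v) * Real.cosh (c₁ * w)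
        ≤ B₂ * Real.cosh (c₂ * w) * Real.cosh (c₁ * v) := by nlinarith
    have := step1.trans step2
    exact le_of_mul_le_mul_right this hcosh1v
  nlinarith [hgoal]

/-- Integrability of a shifted Gaussian on a set. -/
lemma aux_gauss_integrable {σ : ℝ} (hσ : 0 < σ) (t : ℝ) (s : Set ℝ) :
    IntegrableOn (fun v => Real.exp (-(v - t)^2 / (2 * σ^2))) s := by
  have h : Integrable (fun v : ℝ => Real.exp (-(1 / (2 * σ^2)) * v^2)) :=
    integrable_exp_neg_mul_sq (by positivity)
  have h2 : Integrable (fun v : ℝ => Real.exp (-(1 / (2 * σ^2)) * (v - t)^2)) :=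
    h.comp_sub_right t
  have : (fun v : ℝ => Real.exp (-(v - t)^2 / (2 * σ^2)))
      = fun v : ℝ => Real.exp (-(1 / (2 * σ^2)) * (v - t)^2) := by
    funext v; ring_nf
  rw [this]
  exact h2.integrableOn

/-- Total mass of the folded Gaussian kernel is independent of the location. -/
lemma aux_total_mass {σ : ℝ} (hσ : 0 < σ) (t : ℝ) :
    ∫ v in Set.Ici (0:ℝ),
        (Real.exp (-(v - t)^2 / (2 * σ^2)) + Real.exp (-(v + t)^2 / (2 * σ^2)))
      = ∫ v : ℝ, Real.exp (-v^2 / (2 * σ^2)) := by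
  have hg : Integrable (fun v : ℝ => Real.exp (-(v - t)^2 / (2 * σ^2))) := by
    have := aux_gauss_integrable hσ t (univ : Set ℝ)
    rwa [integrableOn_univ] at this
  have hsplit : (∫ v in Set.Ici (0:ℝ),
      (Real.exp (-(v - t)^2 / (2 * σ^2)) + Real.exp (-(v + t)^2 / (2 * σ^2))))
    = (∫ v in Set.Ici (0:ℝ), Real.exp (-(v - t)^2 / (2 * σ^2)))
      + ∫ v in Set.Ici (0:ℝ), Real.exp (-(v + t)^2 / (2 * σ^2)) := by
    apply integral_add
    · exact aux_gauss_integrable hσ t _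
    · have := aux_gauss_integrable hσ (-t) (Set.Ici (0:ℝ))
      simp only [sub_neg_eq_add] at this; exact this
  rw [hsplit]
  have h2 : (∫ v in Set.Ici (0:ℝ), Real.exp (-(v + t)^2 / (2 * σ^2)))
      = ∫ v in Set.Iic (0:ℝ), Real.exp (-(v - t)^2 / (2 * σ^2)) := by
    rw [integral_Ici_eq_integral_Ioi]
    have := integral_comp_neg_Ioi (c := (0:ℝ))
      (f := fun v => Real.exp (-(v - t)^2 / (2 * σ^2)))
    simp only [neg_zero] at this
    rw [← this]
    congr 1; funext v; ring_nf
  rw [h2]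
  have h3 : (∫ v in Set.Ici (0:ℝ), Real.exp (-(v - t)^2 / (2 * σ^2)))
      = ∫ v in Set.Ioi (0:ℝ), Real.exp (-(v - t)^2 / (2 * σ^2)) :=
    integral_Ici_eq_integral_Ioi
  rw [h3]
  rw [add_comm, intervalIntegral.integral_Iic_add_Ioi hg.integrableOn hg.integrableOn]
  have h4 : (∫ v : ℝ, Real.exp (-(v - t)^2 / (2 * σ^2)))
      = ∫ v : ℝ, Real.exp (-v^2 / (2 * σ^2)) := by
    have := integral_sub_right_eq_self (μ := volume) (fun v : ℝ => Real.exp (-v^2 / (2 * σ^2))) t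
    simpa using this
  exact h4

/-- Key monotonicity step: for a non-negative, measurable, non-decreasing `V`
on `[0,∞)` with finite Gaussian integrals, the map
`s ↦ e^{γs²} ∫_{[0,∞)} φ(v, a s) V(v) dv` is non-decreasing in `s ≥ 0`,
where `φ(v,s) = e^{-(v-s)²/(2σ²)} + e^{-(v+s)²/(2σ²)}`. -/
theorem stmt_7 (a σ γ : ℝ) (ha : 0 ≤ a) (hσ : 0 < σ) (hγ : 0 < γ)
    (V : ℝ → ℝ) (hVmeas : Measurable V) (hVnonneg : ∀ v, 0 ≤ V v)
    (hVmono : MonotoneOn V (Set.Ici (0 : ℝ)))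
    (hVint : ∀ m : ℝ,
      IntegrableOn (fun v => Real.exp (-(v - m)^2 / (2 * σ^2)) * V v) (Set.Ici (0 : ℝ))) :
    MonotoneOn
      (fun s => Real.exp (γ * s^2) *
        ∫ v in Set.Ici (0 : ℝ),
          (Real.exp (-(v - a * s)^2 / (2 * σ^2)) + Real.exp (-(v + a * s)^2 / (2 * σ^2)))
            * V v)
      (Set.Ici (0 : ℝ)) := by
  -- kernel with location t
  set φ : ℝ → ℝ → ℝ := fun t v =>
    Real.exp (-(v - t)^2 / (2 * σ^2)) + Real.exp (-(v + t)^2 / (2 * σ^2)) with hφ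
  -- integrability of φ t * V on Ici 0
  have hφVint : ∀ t : ℝ, IntegrableOn (fun v => φ t v * V v) (Set.Ici (0:ℝ)) := by
    intro t
    have h1 := hVint t
    have h2 := hVint (-t)
    have h2' : IntegrableOn (fun v => Real.exp (-(v + t)^2 / (2 * σ^2)) * V v)
        (Set.Ici (0:ℝ)) := by simpa [sub_neg_eq_add] using h2
    have := h1.add h2'
    refine IntegrableOn.congr_fun this ?_ measurableSet_Ici
    intro v _; simp [hφ]; ring
  have hφint : ∀ t : ℝ, IntegrableOn (fun v => φ t v) (Set.Ici (0:ℝ)) := by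
    intro t
    have h2 : IntegrableOn (fun v => Real.exp (-(v + t)^2 / (2 * σ^2))) (Set.Ici (0:ℝ)) := by
      simpa [sub_neg_eq_add] using aux_gauss_integrable hσ (-t) (Set.Ici (0:ℝ))
    exact (aux_gauss_integrable hσ t _).add h2
  -- Main inequality on the integrals
  have key : ∀ t₁ t₂ : ℝ, 0 ≤ t₁ → t₁ ≤ t₂ →
      (∫ v in Set.Ici (0:ℝ), φ t₁ v * V v) ≤ ∫ v in Set.Ici (0:ℝ), φ t₂ v * V v := by
    intro t₁ t₂ ht₁ ht
    set D : ℝ → ℝ := fun v => φ t₂ v - φ t₁ v with hD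
    have hDint : IntegrableOn D (Set.Ici (0:ℝ)) := (hφint t₂).sub (hφint t₁)
    have hDVint : IntegrableOn (fun v => D v * V v) (Set.Ici (0:ℝ)) := by
      have := (hφVint t₂).sub (hφVint t₁)
      refine IntegrableOn.congr_fun this ?_ measurableSet_Ici
      intro v _; simp [hD]; ring
    have hDzero : (∫ v in Set.Ici (0:ℝ), D v) = 0 := by
      rw [hD]
      rw [integral_sub (hφint t₂) (hφint t₁)]
      rw [hφ]
      simp only
      rw [aux_total_mass hσ t₂, aux_total_mass hσ t₁, sub_self]
    -- crossing property for D
    have hcross : ∀ v w : ℝ, 0 ≤ v → v ≤ w → 0 ≤ D v → 0 ≤ D w := by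
      intro v w hv hvw hDv
      have : φ t₁ v ≤ φ t₂ v := by simpa [hD, sub_nonneg] using hDv
      have := aux_crossing hσ ht₁ ht hv hvw this
      simpa [hD, sub_nonneg] using this
    -- goal: 0 ≤ ∫ D V
    have hmain : 0 ≤ ∫ v in Set.Ici (0:ℝ), D v * V v := by
      by_cases hS : ∃ v : ℝ, 0 ≤ v ∧ 0 ≤ D v
      · -- threshold value c
        set S : Set ℝ := {v | 0 ≤ v ∧ 0 ≤ D v} with hSdef
        have hSne : (V '' S).Nonempty := by
          obtain ⟨v, hv⟩ := hS
          exact ⟨V v, ⟨v, hv, rfl⟩⟩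
        have hSbdd : BddBelow (V '' S) := by
          refine ⟨0, ?_⟩
          rintro x ⟨u, _, rfl⟩
          exact hVnonneg u
        set c := sInf (V '' S) with hc
        -- pointwise nonnegativity of D * (V - c)
        have hpt : ∀ v ∈ Set.Ici (0:ℝ), 0 ≤ D v * (V v - c) := by
          intro v hv
          rcases le_or_gt 0 (D v) with hDv | hDv
          · have hvS : v ∈ S := ⟨hv, hDv⟩
            have : c ≤ V v := csInf_le hSbdd ⟨v, hvS, rfl⟩
            have h1 : 0 ≤ V v - c := by linarith
            positivity
          · have hVvc : V v ≤ c := by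
              apply le_csInf hSne
              rintro x ⟨u, huS, rfl⟩
              have hvu : v ≤ u := by
                by_contra hlt
                push_neg at hlt
                exact absurd (hcross u v huS.1 hlt.le huS.2) (not_le.mpr hDv)
              exact hVmono hv (le_trans hv hvu) hvu
            have h1 : D v ≤ 0 := hDv.le
            nlinarith
        have hint : 0 ≤ ∫ v in Set.Ici (0:ℝ), D v * (V v - c) :=
          setIntegral_nonneg measurableSet_Ici hpt
        have heq : (∫ v in Set.Ici (0:ℝ), D v * (V v - c))
            = (∫ v in Set.Ici (0:ℝ), D v * V v) - c * ∫ v in Set.Ici (0:ℝ), D v := by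
          rw [← integral_const_mul]
          rw [← integral_sub hDVint (hDint.const_mul c)]
          congr 1; funext v; ring
        rw [heq, hDzero, mul_zero, sub_zero] at hint
        exact hint
      · -- D < 0 everywhere on [0,∞); since ∫ D = 0 and D ≤ 0, D = 0 a.e., contradiction-free
        push_neg at hS
        have hDneg : ∀ v ∈ Set.Ici (0:ℝ), D v ≤ 0 := fun v hv => (hS v hv).le
        have hae : (0:ℝ → ℝ) ≤ᵐ[volume.restrict (Set.Ici (0:ℝ))] fun v => -D v := by
          filter_upwards [ae_restrict_mem measurableSet_Ici] with v hv
          simpa using hDneg v hv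
        have hnegint : Integrable (fun v => -D v) (volume.restrict (Set.Ici (0:ℝ))) :=
          hDint.neg
        have hzero : (∫ v in Set.Ici (0:ℝ), -D v) = 0 := by
          rw [integral_neg, hDzero, neg_zero]
        have hDae : (fun v => -D v) =ᵐ[volume.restrict (Set.Ici (0:ℝ))] 0 := by
          rw [← integral_eq_zero_iff_of_nonneg_ae hae hnegint]
          exact hzero
        have hDVae : (fun v => D v * V v) =ᵐ[volume.restrict (Set.Ici (0:ℝ))] 0 := by
          filter_upwards [hDae] with v hv
          have : D v = 0 := by simpa [neg_eq_zero] using hv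
          simp [this]
        rw [integral_congr_ae hDVae]
        simp
    have hsub : (∫ v in Set.Ici (0:ℝ), D v * V v)
        = (∫ v in Set.Ici (0:ℝ), φ t₂ v * V v) - ∫ v in Set.Ici (0:ℝ), φ t₁ v * V v := by
      rw [← integral_sub (hφVint t₂) (hφVint t₁)]
      congr 1; funext v; simp [hD]; ring
    linarith [hsub ▸ hmain]
  -- assemble
  intro s₁ hs₁ s₂ hs₂ h12
  simp only
  have ht₁ : 0 ≤ a * s₁ := mul_nonneg ha hs₁
  have ht : a * s₁ ≤ a * s₂ := mul_le_mul_of_nonneg_left h12 ha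
  have hI := key (a * s₁) (a * s₂) ht₁ ht
  have hI1nonneg : 0 ≤ ∫ v in Set.Ici (0:ℝ), φ (a * s₁) v * V v := by
    apply setIntegral_nonneg measurableSet_Ici
    intro v _
    have : 0 ≤ φ (a * s₁) v := by positivity
    exact mul_nonneg this (hVnonneg v)
  have hexp : Real.exp (γ * s₁^2) ≤ Real.exp (γ * s₂^2) := by
    apply Real.exp_le_exp.mpr
    have h0 : (0:ℝ) ≤ s₁ := hs₁
    have : s₁^2 ≤ s₂^2 := by nlinarith
    nlinarith
  calc Real.exp (γ * s₁^2) * ∫ v in Set.Ici (0:ℝ), φ (a * s₁) v * V v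
      ≤ Real.exp (γ * s₂^2) * ∫ v in Set.Ici (0:ℝ), φ (a * s₂) v * V v := by
        apply mul_le_mul hexp hI hI1nonneg (Real.exp_pos _).le
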